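/- arXiv:1911.01714 — 4 statements merged into one kernel-verified Lean document; each statement's English description precedes it below -/
import Mathlib

section
/- Let μ be a valuation on K[x] extending v and φ ∈ K[x] a non-constant monic polynomial. Then φ is μ-minimal (i.e. in_μ(φ) does not divide in_μ(f) in the graded algebra of μ for any nonzero f with deg f < deg φ) if and only if for every f ∈ K[x] with φ-expansion f = Σ_s a_s φ^s (deg a_s < deg φ), one has μ(f) = min_s μ(a_s φ^s). -/
open Polynomial Finset

variable {K : Type*} [Field K] {Λ : Type*} [AddCommGroup Λ] [LinearOrder Λ] [IsOrderedAddMonoid Λ]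

/-- `v` is a valuation on the field `K` with values in `Λ∞ = WithTop Λ`. -/
def IsVal (v : K → WithTop Λ) : Prop :=
  (∀ a, v a = ⊤ ↔ a = 0) ∧ v 1 = 0 ∧ (∀ a b, v (a * b) = v a + v b) ∧
    (∀ a b, min (v a) (v b) ≤ v (a + b))

/-- `μ` is a valuation on `K[x]` extending `v`. -/
def ExtVal (v : K → WithTop Λ) (μ : Polynomial K → WithTop Λ) : Prop :=
  (∀ f g, μ (f * g) = μ f + μ g) ∧ (∀ f g, min (μ f) (μ g) ≤ μ (f + g)) ∧
    (∀ a, μ (Polynomial.C a) = v a)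

/-- `h` divides `g` μ-equivalently (`h ∣_μ g`): there is `q` with `μ(g - q h) > μ(g)`. -/
def MuDvd (μ : Polynomial K → WithTop Λ) (h g : Polynomial K) : Prop :=
  ∃ q : Polynomial K, μ g < μ (g - q * h)

/-- `φ` is μ-minimal: `φ ∤_μ f` for every nonzero `f` of degree less than `deg φ`. -/
def MuMinimal (μ : Polynomial K → WithTop Λ) (φ : Polynomial K) : Prop :=
  ∀ f : Polynomial K, f ≠ 0 → f.degree < φ.degree → ¬ MuDvd μ φ f

/-- `φ` is μ-irreducible: the principal ideal generated by `in_μ φ` in the graded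
algebra is a nonzero prime ideal (stated via μ-divisibility). -/
def MuIrreducible (μ : Polynomial K → WithTop Λ) (φ : Polynomial K) : Prop :=
  μ φ ≠ ⊤ ∧ ¬ MuDvd μ φ 1 ∧
    ∀ f g : Polynomial K, MuDvd μ φ (f * g) → MuDvd μ φ f ∨ MuDvd μ φ g

/-- A (MacLane–Vaquié) key polynomial for `μ`. -/
def KeyPoly (μ : Polynomial K → WithTop Λ) (φ : Polynomial K) : Prop :=
  φ.Monic ∧ MuMinimal μ φ ∧ MuIrreducible μ φ

/-- `μ'` is the augmented valuation `[μ; φ, γ]`: on φ-expansions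
`f = Σ a_s φ^s` (with `deg a_s < deg φ`), `μ' f = min_s (μ(a_s) + s·γ)`. -/
def AugVal (μ : Polynomial K → WithTop Λ) (φ : Polynomial K) (γ : WithTop Λ)
    (μ' : Polynomial K → WithTop Λ) : Prop :=
  ∀ (f : Polynomial K) (n : ℕ) (a : ℕ → Polynomial K),
    (∀ s, (a s).degree < φ.degree) →
    f = ∑ s ∈ Finset.range n, a s * φ ^ s →
    μ' f = (Finset.range n).inf fun s => μ (a s) + s • γ

variable {v : K → WithTop Λ} {μ : Polynomial K → WithTop Λ}

lemma mu_zero (hv : IsVal v) (hμ : ExtVal v μ) : μ 0 = ⊤ := by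
  have := hμ.2.2 0
  rw [map_zero] at this
  rw [this, (hv.1 0).2 rfl]

lemma mu_one (hv : IsVal v) (hμ : ExtVal v μ) : μ 1 = 0 := by
  have := hμ.2.2 1
  rw [map_one] at this
  rw [this, hv.2.1]

lemma v_neg_one (hv : IsVal v) : v (-1) = 0 := by
  have h : v (-1) + v (-1) = 0 := by
    rw [← hv.2.2.1, neg_one_mul, neg_neg, hv.2.1]
  cases hx : v (-1) with
  | top => rw [hx] at h; simp at h
  | coe y =>
    rw [hx, ← WithTop.coe_add, show ((0:WithTop Λ)) = ((0:Λ):WithTop Λ) from rfl,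
      WithTop.coe_eq_coe] at h
    have : y = 0 := by
      rcases lt_trichotomy y 0 with hy | hy | hy
      · exact absurd h (ne_of_lt (by simpa using add_lt_add hy hy))
      · exact hy
      · exact absurd h (ne_of_gt (by simpa using add_lt_add hy hy))
    rw [this]; rfl

lemma mu_neg (hv : IsVal v) (hμ : ExtVal v μ) (f : Polynomial K) : μ (-f) = μ f := by
  have : -f = Polynomial.C (-1) * f := by ring_nf; simp
  rw [this, hμ.1, hμ.2.2, v_neg_one hv, zero_add]

lemma mu_pow (hv : IsVal v) (hμ : ExtVal v μ) (φ : Polynomial K) (s : ℕ) :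
    μ (φ ^ s) = s • μ φ := by
  induction s with
  | zero => simp [mu_one hv hμ]
  | succ n ih => rw [pow_succ, hμ.1, ih, succ_nsmul]

lemma inf_le_mu_sum (hv : IsVal v) (hμ : ExtVal v μ) (n : ℕ) (t : ℕ → Polynomial K) :
    ((Finset.range n).inf fun s => μ (t s)) ≤ μ (∑ s ∈ Finset.range n, t s) := by
  induction n with
  | zero => simp [mu_zero hv hμ]
  | succ n ih =>
    rw [Finset.sum_range_succ, Finset.range_add_one, Finset.inf_insert]
    calc μ (t n) ⊓ ((Finset.range n).inf fun s => μ (t s))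
        ≤ μ (t n) ⊓ μ (∑ s ∈ Finset.range n, t s) := min_le_min le_rfl ih
      _ = min (μ (∑ s ∈ Finset.range n, t s)) (μ (t n)) := min_comm _ _
      _ ≤ _ := hμ.2.1 _ _

lemma exists_expansion (φ : Polynomial K) (hmonic : φ.Monic) (hdeg : 0 < φ.degree) :
    ∀ (N : ℕ) (q : Polynomial K), q.natDegree ≤ N →
      ∃ (n : ℕ) (a : ℕ → Polynomial K), (∀ s, (a s).degree < φ.degree) ∧
        q = ∑ s ∈ Finset.range n, a s * φ ^ s := by
  intro N
  induction N using Nat.strong_induction_on with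
  | _ N ih =>
    intro q hq
    by_cases hlt : q.degree < φ.degree
    · refine ⟨1, fun s => if s = 0 then q else 0, fun s => ?_, by simp⟩
      by_cases hs : s = 0 <;> simp [hs, hlt]
      exact lt_of_le_of_lt bot_le hdeg
    · have hq0 : q ≠ 0 := by
        intro h; rw [h] at hlt; exact hlt (lt_of_le_of_lt bot_le hdeg)
      have hN : 0 < N := by
        rcases Nat.eq_zero_or_pos N with h | h
        · exfalso; apply hlt
          have h0 : q.natDegree ≤ 0 := h ▸ hq
          calc q.degree ≤ (q.natDegree : WithBot ℕ) := Polynomial.degree_le_natDegree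
            _ ≤ (0 : ℕ) := by exact_mod_cast h0
            _ < φ.degree := by exact_mod_cast hdeg
        · exact h
      have hdiv : (q /ₘ φ).natDegree ≤ N - 1 := by
        by_cases h0 : q /ₘ φ = 0
        · simp [h0]
        · have hlt2 : (q /ₘ φ).degree < q.degree :=
            Polynomial.degree_divByMonic_lt q φ hq0 hdeg
          have := Polynomial.natDegree_lt_natDegree h0 hlt2
          omega
      obtain ⟨n, b, hb, hbe⟩ := ih (N - 1) (by omega) (q /ₘ φ) hdiv
      refine ⟨n + 1, fun s => if s = 0 then q %ₘ φ else b (s - 1), fun s => ?_, ?_⟩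
      · by_cases hs : s = 0 <;> simp [hs]
        · exact Polynomial.degree_modByMonic_lt q hmonic
        · exact hb _
      · rw [Finset.sum_range_succ']
        simp only [if_pos rfl]
        have : ∀ i ∈ Finset.range n,
            (if i + 1 = 0 then q %ₘ φ else b (i + 1 - 1)) * φ ^ (i + 1) = φ * (b i * φ ^ i) := by
          intro i _; simp [pow_succ]; ring
        rw [Finset.sum_congr rfl this, ← Finset.mul_sum, ← hbe, pow_zero, mul_one]
        conv_lhs => rw [← Polynomial.modByMonic_add_div q φ]
        simp only [if_true]
        ring

theorem muMinimal_iff_phi_expansion (v : K → WithTop Λ) (μ : Polynomial K → WithTop Λ)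
    (hv : IsVal v) (hμ : ExtVal v μ) (φ : Polynomial K)
    (hmonic : φ.Monic) (hdeg : 0 < φ.degree) :
    MuMinimal μ φ ↔
      ∀ (f : Polynomial K) (n : ℕ) (a : ℕ → Polynomial K),
        (∀ s, (a s).degree < φ.degree) →
        f = ∑ s ∈ Finset.range n, a s * φ ^ s →
        μ f = (Finset.range n).inf fun s => μ (a s * φ ^ s) := by
  classical
  constructor
  · -- μ-minimal → expansion formula
    intro hmin f n a ha hf
    have hge : ((Finset.range n).inf fun s => μ (a s * φ ^ s)) ≤ μ f := by
      rw [hf]; exact inf_le_mu_sum hv hμ n _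
    refine le_antisymm ?_ hge
    by_contra hcon
    push_neg at hcon
    set δ := (Finset.range n).inf fun s => μ (a s * φ ^ s) with hδ
    have hδtop : δ < ⊤ := lt_of_lt_of_le hcon le_top
    have hn : (Finset.range n).Nonempty := by
      by_contra h
      rw [Finset.not_nonempty_iff_eq_empty] at h
      rw [hδ, h] at hδtop
      simp at hδtop
    obtain ⟨s1, hs1mem, hs1⟩ := Finset.exists_mem_eq_inf (Finset.range n) hn
      (fun s => μ (a s * φ ^ s))
    have hex : ∃ s, s < n ∧ μ (a s * φ ^ s) ≤ δ :=
      ⟨s1, Finset.mem_range.mp hs1mem, le_of_eq hs1.symm⟩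
    set s0 := Nat.find hex with hs0def
    obtain ⟨hs0n, hs0le⟩ := Nat.find_spec hex
    have hs0eq : μ (a s0 * φ ^ s0) = δ :=
      le_antisymm hs0le (Finset.inf_le (Finset.mem_range.mpr hs0n))
    -- every earlier term is strictly bigger
    have hsmall : ∀ s ∈ Finset.range s0, δ < μ (a s * φ ^ s) := by
      intro s hs
      have hslt : s < s0 := Finset.mem_range.mp hs
      have h2 := Nat.find_min hex hslt
      push_neg at h2
      exact h2 (lt_trans hslt hs0n)
    set P := ∑ s ∈ Finset.range s0, a s * φ ^ s with hP
    have hPbig : δ < μ P := by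
      refine lt_of_lt_of_le ?_ (inf_le_mu_sum hv hμ s0 _)
      exact Finset.lt_inf_iff hδtop |>.mpr hsmall
    set g := ∑ s ∈ Finset.range (n - s0), a (s0 + s) * φ ^ s with hg
    have hsplit : f = P + φ ^ s0 * g := by
      have hnn : n = s0 + (n - s0) := (Nat.add_sub_cancel' (le_of_lt hs0n)).symm
      rw [hf, hg, hP, Finset.mul_sum]
      conv_lhs => rw [hnn, Finset.sum_range_add]
      congr 1
      refine Finset.sum_congr rfl fun i _ => ?_
      rw [pow_add]; ring
    have hfP : f - P = φ ^ s0 * g := by rw [hsplit]; ring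
    have hfPbig : δ < μ (f - P) := by
      have h1 := hμ.2.1 f (-P)
      rw [mu_neg hv hμ] at h1
      have h2 : δ < min (μ f) (μ P) := lt_min hcon hPbig
      calc δ < min (μ f) (μ P) := h2
        _ ≤ μ (f + -P) := h1
        _ = μ (f - P) := by rw [sub_eq_add_neg]
    -- μ (f - P) = s0 • μ φ + μ g
    have hval : μ (f - P) = s0 • μ φ + μ g := by
      rw [hfP, hμ.1, mu_pow hv hμ]
    have hδval : δ = μ (a s0) + s0 • μ φ := by
      rw [← hs0eq, hμ.1, mu_pow hv hμ]
    have hfin : s0 • μ φ ≠ ⊤ := by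
      intro h
      rw [h, add_top] at hδval
      exact absurd hδval (ne_of_lt hδtop)
    have hgt : μ (a s0) + s0 • μ φ < μ g + s0 • μ φ := by
      rw [← hδval]
      calc δ < μ (f - P) := hfPbig
        _ = s0 • μ φ + μ g := hval
        _ = μ g + s0 • μ φ := add_comm _ _
    have hmulg : μ (a s0) < μ g := by
      rwa [WithTop.add_lt_add_iff_right hfin] at hgt
    -- build the μ-divisibility witness
    have hmtop : μ (a s0) < ⊤ := by
      rw [lt_top_iff_ne_top]
      intro h
      rw [h, top_add] at hδval
      exact absurd hδval (ne_of_lt hδtop)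
    have ha0 : a s0 ≠ 0 := by
      intro h
      rw [h, mu_zero hv hμ] at hmtop
      exact lt_irrefl _ hmtop
    set m := n - s0 - 1 with hm
    set R := ∑ s ∈ Finset.range m, a (s0 + (s + 1)) * φ ^ s with hR
    have hgR : g = a s0 + φ * R := by
      have hnm : n - s0 = m + 1 := by omega
      rw [hg, hnm, Finset.sum_range_succ', hR, Finset.mul_sum]
      simp only [pow_zero, mul_one, add_zero]
      rw [add_comm]
      congr 1
      refine Finset.sum_congr rfl fun i _ => ?_
      rw [pow_succ]; ring
    refine hmin (a s0) ha0 (ha s0) ⟨-R, ?_⟩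
    have : a s0 - -R * φ = g := by rw [hgR]; ring
    rw [this]
    exact hmulg
  · -- expansion formula → μ-minimal
    intro hexp f hf0 hfd
    rintro ⟨q, hq⟩
    obtain ⟨m, b, hb, hbe⟩ :=
      exists_expansion φ hmonic hdeg (-q).natDegree (-q) le_rfl
    set a : ℕ → Polynomial K := fun s => if s = 0 then f else b (s - 1) with haa
    have ha : ∀ s, (a s).degree < φ.degree := by
      intro s
      rcases eq_or_ne s 0 with hs | hs
      · simpa [haa, hs] using hfd
      · simpa [haa, hs] using hb (s - 1)
    have heq : f - q * φ = ∑ s ∈ Finset.range (m + 1), a s * φ ^ s := by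
      rw [Finset.sum_range_succ']
      have h1 : ∀ i ∈ Finset.range m, a (i + 1) * φ ^ (i + 1) = φ * (b i * φ ^ i) := by
        intro i _; simp [haa, pow_succ]; ring
      rw [Finset.sum_congr rfl h1, ← Finset.mul_sum, ← hbe]
      simp only [haa, if_pos rfl, pow_zero, mul_one]
      ring
    have key := hexp (f - q * φ) (m + 1) a ha heq
    have h0 : μ (f - q * φ) ≤ μ f := by
      rw [key]
      have := Finset.inf_le (f := fun s => μ (a s * φ ^ s))
        (Finset.mem_range.mpr (Nat.succ_pos m))
      simpa [haa] using this
    exact absurd hq (not_lt.mpr h0)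
end

section
/- Let μ' = [μ; φ, γ] be an augmented valuation with γ < ∞. Then the support of μ' is trivial (μ'⁻¹(∞) = 0); if instead γ = ∞, the support of μ' is the principal ideal φK[x]. -/
open Polynomial Finset

variable {K : Type*} [Field K] {Λ : Type*} [AddCommGroup Λ] [LinearOrder Λ] [IsOrderedAddMonoid Λ]

section Helpers
variable {K : Type*} [Field K]

lemma exists_exp (φ : K[X]) (hm : φ.Monic) (hd : (0:WithBot ℕ) < φ.degree) (f : K[X]) :
    ∃ (n : ℕ) (a : ℕ → K[X]), (∀ s, (a s).degree < φ.degree) ∧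
      f = ∑ s ∈ Finset.range n, a s * φ ^ s ∧ a 0 = f %ₘ φ := by
  have H : ∀ N (f : K[X]), f.natDegree < N → ∃ (n : ℕ) (a : ℕ → K[X]),
      (∀ s, (a s).degree < φ.degree) ∧ f = ∑ s ∈ Finset.range n, a s * φ ^ s ∧
      a 0 = f %ₘ φ := by
    intro N
    induction N with
    | zero => intro f h; omega
    | succ N ih =>
      intro f hf
      by_cases hq : f /ₘ φ = 0
      · refine ⟨1, fun s => if s = 0 then f %ₘ φ else 0, ?_, ?_, by simp⟩
        · intro s
          rcases Nat.eq_zero_or_pos s with h | h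
          · simpa [h] using degree_modByMonic_lt f hm
          · simp only [if_neg (Nat.pos_iff_ne_zero.mp h), degree_zero]
            exact lt_of_le_of_lt bot_le (lt_of_le_of_lt bot_le hd)
        · have := (modByMonic_add_div f φ).symm
          simpa [hq] using this
      · have hf0 : f ≠ 0 := by
          intro h; exact hq (by simp [h])
        have hdeg : (f /ₘ φ).natDegree < f.natDegree :=
          natDegree_lt_natDegree hq (degree_divByMonic_lt f φ hf0 hd)
        obtain ⟨n, b, hb, hsum, hb0⟩ := ih (f /ₘ φ) (by omega)
        refine ⟨n + 1, fun s => if s = 0 then f %ₘ φ else b (s - 1), ?_, ?_, by simp⟩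
        · intro s
          rcases Nat.eq_zero_or_pos s with h | h
          · simpa [h] using degree_modByMonic_lt f hm
          · simpa [if_neg (Nat.pos_iff_ne_zero.mp h)] using hb (s - 1)
        · rw [Finset.sum_range_succ']
          simp only [Nat.succ_ne_zero, if_true, if_false, Nat.add_sub_cancel, pow_zero, mul_one]
          have : ∑ i ∈ Finset.range n, b i * φ ^ (i + 1)
              = (∑ i ∈ Finset.range n, b i * φ ^ i) * φ := by
            rw [Finset.sum_mul]; congr 1; ext i; ring_nf
          rw [this, ← hsum, add_comm, mul_comm]
          exact (modByMonic_add_div f φ).symm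
  exact H (f.natDegree + 1) f (Nat.lt_succ_self _)

variable {Λ : Type*} [AddCommGroup Λ] [LinearOrder Λ] [IsOrderedAddMonoid Λ]

lemma nsmul_ne_top {γ : WithTop Λ} (hγ : γ ≠ ⊤) (s : ℕ) : s • γ ≠ ⊤ := by
  induction s with
  | zero => simp
  | succ k ih =>
    rw [succ_nsmul]
    simp [WithTop.add_eq_top, ih, hγ]

lemma nsmul_top_eq {s : ℕ} (hs : s ≠ 0) : s • (⊤ : WithTop Λ) = ⊤ := by
  obtain ⟨k, rfl⟩ := Nat.exists_eq_succ_of_ne_zero hs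
  rw [succ_nsmul, add_top]

end Helpers

/-- if `γ < ∞`, the augmented valuation `μ' = [μ; φ, γ]` has trivial
support; if `γ = ∞`, its support is the principal ideal `φ K[x]`. -/
theorem augmentation_support (v : K → WithTop Λ) (μ : Polynomial K → WithTop Λ)
    (hv : IsVal v) (hμ : ExtVal v μ)
    (hsupp : ∀ f : Polynomial K, f ≠ 0 → μ f ≠ ⊤)
    (φ : Polynomial K) (hφ : KeyPoly μ φ)
    (γ : WithTop Λ) (hγ : μ φ < γ)
    (μ' : Polynomial K → WithTop Λ) (haug : AugVal μ φ γ μ') :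
    (γ ≠ ⊤ → ∀ f : Polynomial K, μ' f = ⊤ ↔ f = 0) ∧
      (γ = ⊤ → ∀ f : Polynomial K, μ' f = ⊤ ↔ φ ∣ f) := by
  obtain ⟨hmon, -, -, hnd, -⟩ := hφ
  have hμ0 : μ 0 = ⊤ := by
    have := hμ.2.2 0; rw [map_zero] at this; rw [this]; exact (hv.1 0).mpr rfl
  have hμ1 : μ 1 = 0 := by
    have := hμ.2.2 1; rw [map_one] at this; rw [this]; exact hv.2.1
  -- degree φ > 0
  have hd : (0 : WithBot ℕ) < φ.degree := by
    by_contra h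
    push_neg at h
    have hφ1 : φ = 1 := hmon.degree_le_zero_iff_eq_one.mp h
    exact hnd ⟨1, by simp [hφ1, hμ0, hμ1]⟩
  constructor
  · intro hγ f
    constructor
    · intro htop
      by_contra hf
      obtain ⟨n, a, ha, hsum, -⟩ := exists_exp φ hmon hd f
      rw [haug f n a ha hsum] at htop
      have hex : ∃ s ∈ Finset.range n, a s ≠ 0 := by
        by_contra h
        push_neg at h
        apply hf
        rw [hsum]
        exact Finset.sum_eq_zero fun s hs => by rw [h s hs, zero_mul]
      obtain ⟨s, hs, has⟩ := hex
      have hle := Finset.inf_le (f := fun s => μ (a s) + s • γ) hs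
      rw [htop, top_le_iff, WithTop.add_eq_top] at hle
      rcases hle with h | h
      · exact hsupp _ has h
      · exact nsmul_ne_top hγ s h
    · rintro rfl
      have := haug 0 0 (fun _ => 0) (fun s => by
        rw [degree_zero]; exact lt_of_le_of_lt bot_le hd) (by simp)
      rw [Finset.range_zero, Finset.inf_empty] at this; exact this
  · rintro rfl f
    obtain ⟨n, a, ha, hsum, ha0⟩ := exists_exp φ hmon hd f
    rw [haug f n a ha hsum]
    rcases Nat.eq_zero_or_pos n with hn | hn
    · subst hn
      simp only [Finset.range_zero, Finset.sum_empty] at hsum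
      subst hsum
      rw [Finset.range_zero, Finset.inf_empty]
      simp
    · have key : (Finset.range n).inf (fun s => μ (a s) + s • (⊤ : WithTop Λ)) = ⊤
          ↔ μ (a 0) = ⊤ := by
        rw [Finset.inf_eq_top_iff]
        constructor
        · intro h
          have := h 0 (Finset.mem_range.mpr hn)
          rwa [zero_smul, add_zero] at this
        · intro h s _
          rcases Nat.eq_zero_or_pos s with rfl | hs
          · rwa [zero_smul, add_zero]
          · rw [nsmul_top_eq (Nat.pos_iff_ne_zero.mp hs), add_top]
      rw [key]
      constructor
      · intro h
        have ha00 : a 0 = 0 := by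
          by_contra h0; exact hsupp _ h0 h
        rw [ha00] at ha0
        exact (modByMonic_eq_zero_iff_dvd hmon).mp ha0.symm
      · intro hdvd
        have : f %ₘ φ = 0 := (modByMonic_eq_zero_iff_dvd hmon).mpr hdvd
        rw [ha0, this, hμ0]
end

section
/- Let ρ < μ be valuations on K[x] taking values in the same ordered group Λ (ρ(f) ≤ μ(f) for all f, with strict inequality somewhere), and let φ be a monic polynomial of minimal degree among those satisfying ρ(φ) < μ(φ). Then for any nonzero f ∈ K[x], ρ(f) = μ(f) if and only if φ does not ρ-divide f. -/
open Polynomial Finset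

variable {K : Type*} [Field K] {Λ : Type*} [AddCommGroup Λ] [LinearOrder Λ] [IsOrderedAddMonoid Λ]

/-- if `ρ < μ` and `φ` is a monic polynomial of minimal degree with
`ρ(φ) < μ(φ)`, then for nonzero `f`: `ρ(f) = μ(f)` iff `φ` does not ρ-divide `f`. -/
theorem gap_equality (v : K → WithTop Λ) (ρ μ : Polynomial K → WithTop Λ)
    (hv : IsVal v) (hρ : ExtVal v ρ) (hμ : ExtVal v μ)
    (hle : ∀ f : Polynomial K, ρ f ≤ μ f) (hne : ρ ≠ μ)
    (φ : Polynomial K) (hmonic : φ.Monic) (hφ : ρ φ < μ φ)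
    (hmin : ∀ g : Polynomial K, g.Monic → ρ g < μ g → φ.degree ≤ g.degree) :
    ∀ f : Polynomial K, f ≠ 0 → (ρ f = μ f ↔ ¬ MuDvd ρ φ f) := by
  obtain ⟨hv0, hv1, hvmul, hvadd⟩ := hv
  obtain ⟨hρmul, hρadd, hρC⟩ := hρ
  obtain ⟨hμmul, hμadd, hμC⟩ := hμ
  -- value of -1 is 0
  have hvneg1 : v (-1 : K) = 0 := by
    have h1 : v (-1 : K) + v (-1 : K) = 0 := by
      rw [← hvmul]; norm_num [hv1]
    cases h : v (-1 : K) with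
    | top => rw [h] at h1; simp at h1
    | coe a =>
      rw [h] at h1
      have ha : a + a = 0 := by exact_mod_cast h1
      have : a = 0 := by
        by_contra hne'
        rcases lt_or_gt_of_ne hne' with h' | h'
        · exact absurd ha (ne_of_lt (add_neg h' h'))
        · exact absurd ha (ne_of_gt (add_pos h' h'))
      simp [this]
  -- ρ and μ of negation and zero
  have hρneg : ∀ g : Polynomial K, ρ (-g) = ρ g := by
    intro g
    have : (-g) = Polynomial.C (-1) * g := by rw [map_neg, map_one, neg_one_mul]
    rw [this, hρmul, hρC, hvneg1, zero_add]
  have hμneg : ∀ g : Polynomial K, μ (-g) = μ g := by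
    intro g
    have : (-g) = Polynomial.C (-1) * g := by rw [map_neg, map_one, neg_one_mul]
    rw [this, hμmul, hμC, hvneg1, zero_add]
  have hρ0 : ρ 0 = ⊤ := by rw [← Polynomial.C_0, hρC]; exact (hv0 0).mpr rfl
  have hμ0 : μ 0 = ⊤ := by rw [← Polynomial.C_0, hμC]; exact (hv0 0).mpr rfl
  have hρsub : ∀ a b : Polynomial K, min (ρ a) (ρ b) ≤ ρ (a - b) := by
    intro a b
    have := hρadd a (-b)
    rw [hρneg] at this
    simpa [sub_eq_add_neg] using this
  have hμsub : ∀ a b : Polynomial K, min (μ a) (μ b) ≤ μ (a - b) := by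
    intro a b
    have := hμadd a (-b)
    rw [hμneg] at this
    simpa [sub_eq_add_neg] using this
  -- ρ and μ agree below deg φ
  have agree : ∀ r : Polynomial K, r.degree < φ.degree → ρ r = μ r := by
    intro r hr
    by_cases h0 : r = 0
    · rw [h0, hρ0, hμ0]
    · set r0 : Polynomial K := r * Polynomial.C r.leadingCoeff⁻¹ with hr0def
      have hm : r0.Monic := monic_mul_leadingCoeff_inv h0
      have hdeg : r0.degree = r.degree := degree_mul_leadingCoeff_inv r h0
      have heq : ρ r0 = μ r0 := by
        by_contra hne'
        have hlt : ρ r0 < μ r0 := lt_of_le_of_ne (hle r0) hne'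
        have := hmin r0 hm hlt
        rw [hdeg] at this
        exact absurd hr (not_lt_of_ge this)
      have hback : r0 * Polynomial.C r.leadingCoeff = r := by
        rw [hr0def, mul_assoc, ← Polynomial.C_mul,
          inv_mul_cancel₀ (Polynomial.leadingCoeff_ne_zero.mpr h0), Polynomial.C_1, mul_one]
      rw [← hback, hρmul, hμmul, hρC, hμC, heq]
  -- forward: ρ-divisibility forces a gap
  have fwd : ∀ f : Polynomial K, MuDvd ρ φ f → ρ f < μ f := by
    rintro f ⟨q, hq⟩
    have hftop : ρ f ≠ ⊤ := ne_top_of_lt hq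
    -- ρ (q*φ) = ρ f
    have h1 : ρ f ≤ ρ (q * φ) := by
      have h := hρsub f (f - q * φ)
      have hfe : f - (f - q * φ) = q * φ := by ring
      rw [hfe, min_eq_left (le_of_lt hq)] at h
      exact h
    have h2 : ρ (q * φ) ≤ ρ f := by
      have h := hρadd (f - q * φ) (q * φ)
      have hfe : f - q * φ + q * φ = f := by ring
      rw [hfe] at h
      rcases min_le_iff.mp h with h' | h'
      · exact absurd (lt_of_lt_of_le hq h') (lt_irrefl _)
      · exact h'
    have heq : ρ q + ρ φ = ρ f := by rw [← hρmul]; exact le_antisymm h2 h1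
    have hqtop : ρ q ≠ ⊤ := by
      intro ht
      rw [ht, top_add] at heq
      exact hftop heq.symm
    have key : ρ f < μ (q * φ) :=
      calc ρ f = ρ q + ρ φ := heq.symm
        _ < ρ q + μ φ := WithTop.add_lt_add_left hqtop hφ
        _ ≤ μ q + μ φ := add_le_add_left (hle q) _
        _ = μ (q * φ) := (hμmul q φ).symm
    have h3 : min (μ (f - q * φ)) (μ (q * φ)) ≤ μ f := by
      have h := hμadd (f - q * φ) (q * φ)
      have hfe : f - q * φ + q * φ = f := by ring
      rwa [hfe] at h
    have : ρ f < min (μ (f - q * φ)) (μ (q * φ)) :=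
      lt_min (lt_of_lt_of_le hq (hle _)) key
    exact lt_of_lt_of_le this h3
  -- backward: a gap forces ρ-divisibility
  have bwd : ∀ f : Polynomial K, ρ f < μ f → MuDvd ρ φ f := by
    intro f hf
    refine ⟨f /ₘ φ, ?_⟩
    set q : Polynomial K := f /ₘ φ with hqdef
    set r : Polynomial K := f %ₘ φ with hrdef
    have hfe : r + φ * q = f := Polynomial.modByMonic_add_div f φ
    have hr : f - q * φ = r := by rw [← hfe]; ring
    rw [hr]
    by_contra hle'
    push_neg at hle'
    have hra : ρ r = μ r := agree r (Polynomial.degree_modByMonic_lt f hmonic)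
    have hftop : ρ f ≠ ⊤ := ne_top_of_lt hf
    have hμr_lt : μ r < μ f := lt_of_le_of_lt (hra ▸ hle') hf
    -- μ (q*φ) ≤ μ r
    have h1 : μ (q * φ) ≤ μ r := by
      have h := hμsub f (q * φ)
      rw [hr] at h
      rcases min_le_iff.mp h with h' | h'
      · exact absurd (lt_of_lt_of_le hμr_lt h') (lt_irrefl _)
      · exact h'
    have hqtop : ρ q ≠ ⊤ := by
      intro ht
      have hμq : μ q = ⊤ := top_le_iff.mp (ht ▸ hle q)
      rw [hμmul, hμq, top_add] at h1
      have : μ r = ⊤ := top_le_iff.mp h1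
      rw [this] at hμr_lt
      exact absurd hμr_lt (not_top_lt)
    have h2 : ρ (q * φ) < ρ r :=
      calc ρ (q * φ) = ρ q + ρ φ := hρmul q φ
        _ < ρ q + μ φ := WithTop.add_lt_add_left hqtop hφ
        _ ≤ μ q + μ φ := add_le_add_left (hle q) _
        _ = μ (q * φ) := (hμmul q φ).symm
        _ ≤ μ r := h1
        _ = ρ r := hra.symm
    have h3 : min (ρ f) (ρ r) ≤ ρ (q * φ) := by
      have h := hρsub f r
      have hfe2 : f - r = q * φ := by rw [← hfe]; ring
      rwa [hfe2] at h
    rw [min_eq_right hle'] at h3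
    exact absurd h2 (not_lt_of_ge h3)
  intro f _
  constructor
  · intro heq hd
    exact absurd heq (ne_of_lt (fwd f hd))
  · intro hnd
    by_contra hne'
    exact hnd (bwd f (lt_of_le_of_ne (hle f) hne'))
end

section
/- Let ρ < μ < ν be valuations on K[x] with values in a common ordered abelian group, all extending v. Then the sets of monic polynomials of minimal degree where the valuations differ satisfy Φ_{ρ,μ} = Φ_{ρ,ν}; in particular, for all f ∈ K[x], ρ(f) = ν(f) if and only if ρ(f) = μ(f). -/
open Polynomial Finset

variable {K : Type*} [Field K] {Λ : Type*} [AddCommGroup Λ] [LinearOrder Λ] [IsOrderedAddMonoid Λ]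

/-- The set `Φ_{ρ,μ}` of monic polynomials of minimal degree where `ρ` and `μ` differ. -/
def PhiSet (ρ μ : Polynomial K → WithTop Λ) : Set (Polynomial K) :=
  {φ | φ.Monic ∧ ρ φ < μ φ ∧ ∀ g : Polynomial K, g.Monic → ρ g < μ g → φ.degree ≤ g.degree}

section AuxLemmas

variable {v : K → WithTop Λ} {η : Polynomial K → WithTop Λ}

private lemma ev_zero (hv : IsVal v) (hη : ExtVal v η) : η (0 : Polynomial K) = ⊤ := by
  have h := hη.2.2 0
  rw [Polynomial.C_0] at h
  rw [h]
  exact (hv.1 0).mpr rfl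

private lemma ev_one (hv : IsVal v) (hη : ExtVal v η) : η (1 : Polynomial K) = 0 := by
  have h := hη.2.2 1
  rw [Polynomial.C_1] at h
  rw [h]
  exact hv.2.1

private lemma ev_neg (hv : IsVal v) (hη : ExtVal v η) (f : Polynomial K) : η (-f) = η f := by
  have hm1 : η (-1 : Polynomial K) = 0 := by
    have h2 := hη.1 (-1) (-1)
    rw [neg_one_mul, neg_neg, ev_one hv hη] at h2
    -- h2 : 0 = η (-1) + η (-1)
    by_cases hx : η (-1 : Polynomial K) = ⊤
    · rw [hx, top_add] at h2
      simp at h2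
    · lift η (-1 : Polynomial K) to Λ using hx with a hxa
      have ha : a + a = 0 := by exact_mod_cast h2.symm
      have ha0 : a = 0 := by
        rcases lt_trichotomy a 0 with h | h | h
        · have h3 : a + a < 0 + 0 := add_lt_add h h
          rw [add_zero, ha] at h3
          exact absurd h3 (lt_irrefl 0)
        · exact h
        · have h3 : (0 : Λ) + 0 < a + a := add_lt_add h h
          rw [add_zero, ha] at h3
          exact absurd h3 (lt_irrefl 0)
      rw [ha0]
      rfl
  have h := hη.1 (-1) f
  rw [neg_one_mul, hm1, zero_add] at h
  exact h

private lemma ev_add_eq_left (hv : IsVal v) (hη : ExtVal v η) {f g : Polynomial K}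
    (hlt : η f < η g) : η (f + g) = η f := by
  have h1 : η f ≤ η (f + g) := by
    have h := hη.2.1 f g
    rwa [min_eq_left hlt.le] at h
  refine le_antisymm ?_ h1
  by_contra hcon
  push_neg at hcon
  have h2 : min (η (f + g)) (η (-g)) ≤ η (f + g + -g) := hη.2.1 _ _
  rw [ev_neg hv hη, add_neg_cancel_right] at h2
  exact absurd h2 (not_le.mpr (lt_min hcon hlt))

private lemma ev_add_eq_min (hv : IsVal v) (hη : ExtVal v η) {f g : Polynomial K}
    (h : η f ≠ η g) : η (f + g) = min (η f) (η g) := by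
  rcases h.lt_or_gt with hlt | hlt
  · rw [min_eq_left hlt.le, ev_add_eq_left hv hη hlt]
  · rw [min_eq_right hlt.le, add_comm, ev_add_eq_left hv hη hlt]

private lemma ev_inf_le_sum (hv : IsVal v) (hη : ExtVal v η) (F : ℕ → Polynomial K) :
    ∀ n : ℕ, (range n).inf (fun s => η (F s)) ≤ η (∑ s ∈ range n, F s) := by
  intro n
  induction n with
  | zero => simp [ev_zero hv hη]
  | succ n ih =>
    rw [Finset.sum_range_succ, Finset.range_add_one, Finset.inf_insert]
    calc η (F n) ⊓ (range n).inf (fun s => η (F s))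
        ≤ η (F n) ⊓ η (∑ s ∈ range n, F s) := inf_le_inf_left _ ih
      _ = min (η (∑ s ∈ range n, F s)) (η (F n)) := by rw [min_comm]
      _ ≤ η (∑ s ∈ range n, F s + F n) := hη.2.1 _ _

private lemma ev_scale (hη : ExtVal v η) {f : Polynomial K} (hf : f ≠ 0) :
    η f = η (f * C f.leadingCoeff⁻¹) + v f.leadingCoeff := by
  have hc : f.leadingCoeff ≠ 0 := leadingCoeff_ne_zero.mpr hf
  conv_lhs => rw [show f = f * C f.leadingCoeff⁻¹ * C f.leadingCoeff by
    rw [mul_assoc, ← C_mul, inv_mul_cancel₀ hc, C_1, mul_one]]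
  rw [hη.1, hη.2.2]

private lemma inf_range_succ' (F : ℕ → WithTop Λ) :
    ∀ n : ℕ, (range (n + 1)).inf F = F 0 ⊓ (range n).inf (fun s => F (s + 1)) := by
  intro n
  induction n with
  | zero => simp
  | succ n ih =>
    have h1 : (range (n + 1 + 1)).inf F = F (n + 1) ⊓ (range (n + 1)).inf F := by
      rw [Finset.range_add_one, Finset.inf_insert]
    have h2 : (range (n + 1)).inf (fun s => F (s + 1))
        = F (n + 1) ⊓ (range n).inf (fun s => F (s + 1)) := by
      rw [Finset.range_add_one]
      simp only [Finset.inf_insert]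
    rw [h1, ih, h2, inf_left_comm]

private lemma add_inf' (c : WithTop Λ) (F : ℕ → WithTop Λ) :
    ∀ n : ℕ, c + (range n).inf F = (range n).inf (fun s => c + F s) := by
  intro n
  induction n with
  | zero => simp
  | succ n ih =>
    rw [Finset.range_add_one]
    simp only [Finset.inf_insert]
    rw [← ih]
    exact (min_add_add_left _ _ _).symm

end AuxLemmas

/-- if `ρ < μ < ν` then `Φ_{ρ,μ} = Φ_{ρ,ν}`; in particular
`ρ(f) = ν(f)` iff `ρ(f) = μ(f)` for all `f`. -/
theorem PhiSet_eq_of_lt_lt (v : K → WithTop Λ) (ρ μ ν : Polynomial K → WithTop Λ)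
    (hv : IsVal v) (hρ : ExtVal v ρ) (hμ : ExtVal v μ) (hν : ExtVal v ν)
    (hρμ : ∀ f : Polynomial K, ρ f ≤ μ f) (hρμne : ρ ≠ μ)
    (hμν : ∀ f : Polynomial K, μ f ≤ ν f) (hμνne : μ ≠ ν) :
    PhiSet ρ μ = PhiSet ρ ν ∧ ∀ f : Polynomial K, (ρ f = ν f ↔ ρ f = μ f) := by
  classical
  have hρ0 : ρ (0 : Polynomial K) = ⊤ := ev_zero hv hρ
  have hμ0 : μ (0 : Polynomial K) = ⊤ := ev_zero hv hμ
  have hvtop : ∀ c : K, c ≠ 0 → v c ≠ ⊤ := fun c hc h => hc ((hv.1 c).mp h)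
  -- monicization
  have hmon : ∀ f : Polynomial K, f ≠ 0 → ∃ g : Polynomial K, g.Monic ∧
      g.natDegree = f.natDegree ∧ ∃ c : K, c ≠ 0 ∧
      ρ f = ρ g + v c ∧ μ f = μ g + v c ∧ ν f = ν g + v c := by
    intro f hf
    have hc : f.leadingCoeff ≠ 0 := leadingCoeff_ne_zero.mpr hf
    exact ⟨f * C f.leadingCoeff⁻¹, monic_mul_leadingCoeff_inv hf,
      natDegree_eq_of_degree_eq (degree_mul_leadingCoeff_inv f hf),
      f.leadingCoeff, hc, ev_scale hρ hf, ev_scale hμ hf, ev_scale hν hf⟩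
  -- a monic polynomial of minimal degree where ρ and μ differ
  have hexists : ∃ n : ℕ, ∃ g : Polynomial K, g.Monic ∧ ρ g < μ g ∧ g.natDegree = n := by
    obtain ⟨f, hf⟩ := Function.ne_iff.mp hρμne
    have hf0 : f ≠ 0 := by
      rintro rfl
      rw [hρ0, hμ0] at hf
      exact hf rfl
    have hlt : ρ f < μ f := lt_of_le_of_ne (hρμ f) hf
    obtain ⟨g, hgm, hgd, c, hc, h1, h2, _⟩ := hmon f hf0
    rw [h1, h2] at hlt
    exact ⟨g.natDegree, g, hgm, (WithTop.add_lt_add_iff_right (hvtop c hc)).mp hlt, rfl⟩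
  obtain ⟨ψ, hψmonic, hψlt, hψdeg⟩ := Nat.find_spec hexists
  have hψmin : ∀ g : Polynomial K, g.Monic → ρ g < μ g → ψ.natDegree ≤ g.natDegree := by
    intro g hg hlt
    rw [hψdeg]
    exact Nat.find_min' hexists ⟨g, hg, hlt, rfl⟩
  have hψd_pos : 0 < ψ.natDegree := by
    rcases Nat.eq_zero_or_pos ψ.natDegree with h0 | h
    · exfalso
      have h1 : ψ = 1 := hψmonic.natDegree_eq_zero.mp h0
      rw [h1, ev_one hv hρ, ev_one hv hμ] at hψlt
      exact lt_irrefl _ hψlt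
    · exact h
  -- ρ and μ agree below degree m
  have hlow : ∀ f : Polynomial K, f.natDegree < ψ.natDegree → ρ f = μ f := by
    intro f hdeg
    rcases eq_or_ne f 0 with rfl | hf0
    · rw [hρ0, hμ0]
    refine le_antisymm (hρμ f) ?_
    by_contra hcon
    push_neg at hcon
    obtain ⟨g, hgm, hgd, c, hc, h1, h2, _⟩ := hmon f hf0
    rw [h1, h2] at hcon
    have hglt : ρ g < μ g := (WithTop.add_lt_add_iff_right (hvtop c hc)).mp hcon
    have := hψmin g hgm hglt
    omega
  -- mod-by-monic degree helper
  have hmodlt : ∀ p g : Polynomial K, g.Monic → 0 < g.natDegree →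
      (p %ₘ g).natDegree < g.natDegree := by
    intro p g hg hgd
    rcases eq_or_ne (p %ₘ g) 0 with h | h
    · rw [h, natDegree_zero]; exact hgd
    · exact natDegree_lt_natDegree h (degree_modByMonic_lt p hg)
  -- existence of ψ-expansions
  have hexp : ∀ f : Polynomial K, ∃ (n : ℕ) (a : ℕ → Polynomial K),
      (∀ s, (a s).natDegree < ψ.natDegree) ∧ f = ∑ s ∈ range n, a s * ψ ^ s := by
    have haux : ∀ d : ℕ, ∀ f : Polynomial K, f.natDegree ≤ d → ∃ (n : ℕ) (a : ℕ → Polynomial K),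
        (∀ s, (a s).natDegree < ψ.natDegree) ∧ f = ∑ s ∈ range n, a s * ψ ^ s := by
      intro d
      induction d using Nat.strong_induction_on with
      | _ d ih =>
        intro f hfd
        by_cases hsmall : f.natDegree < ψ.natDegree
        · refine ⟨1, fun s => if s = 0 then f else 0, ?_, ?_⟩
          · intro s
            by_cases h : s = 0 <;> simp [h, hsmall, hψd_pos]
          · simp
        · push_neg at hsmall
          have hf0 : f ≠ 0 := by
            rintro rfl
            rw [natDegree_zero] at hsmall
            omega
          have hq : (f /ₘ ψ).natDegree < f.natDegree := by
            rw [natDegree_divByMonic f hψmonic]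
            omega
          obtain ⟨n, a, ha, hsum⟩ := ih (f /ₘ ψ).natDegree (lt_of_lt_of_le hq hfd)
            (f /ₘ ψ) le_rfl
          refine ⟨n + 1, fun s => if s = 0 then f %ₘ ψ else a (s - 1), ?_, ?_⟩
          · intro s
            by_cases h : s = 0
            · simpa [h] using hmodlt f ψ hψmonic hψd_pos
            · simpa [h] using ha (s - 1)
          · rw [Finset.sum_range_succ']
            simp only [Nat.succ_ne_zero, if_false, Nat.add_sub_cancel, if_pos rfl, pow_zero,
              mul_one]
            have h1 : ∑ s ∈ range n, a s * ψ ^ (s + 1) = ψ * (f /ₘ ψ) := by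
              rw [hsum, Finset.mul_sum]
              exact Finset.sum_congr rfl (fun s _ => by ring)
            rw [h1, add_comm]
            exact (modByMonic_add_div f ψ).symm
    exact fun f => haux f.natDegree f le_rfl
  -- decomposition of a sum
  have hdecomp : ∀ (a : ℕ → Polynomial K) (n : ℕ),
      ∑ s ∈ range (n + 1), a s * ψ ^ s = a 0 + ψ * ∑ s ∈ range n, a (s + 1) * ψ ^ s := by
    intro a n
    rw [Finset.sum_range_succ', pow_zero, mul_one, add_comm]
    congr 1
    rw [Finset.mul_sum]
    exact Finset.sum_congr rfl (fun s _ => by ring)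
  -- key pointwise lemma: no cancellation against small polynomials
  have hB1 : ∀ b w : Polynomial K, b.natDegree < ψ.natDegree →
      ρ (b + ψ * w) = min (ρ b) (ρ (ψ * w)) := by
    intro b w hb
    rcases eq_or_ne (ρ b) (ρ (ψ * w)) with heq | hne
    · have hminle : min (ρ b) (ρ (ψ * w)) ≤ ρ (b + ψ * w) := hρ.2.1 b (ψ * w)
      rw [← heq, min_self] at hminle
      rw [← heq, min_self]
      refine le_antisymm ?_ hminle
      rcases eq_or_ne (ρ b) ⊤ with htop | htop
      · rw [htop]; exact le_top
      by_contra hcon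
      push_neg at hcon
      have hμb : μ b = ρ b := (hlow b hb).symm
      have hρψw : ρ (ψ * w) = ρ ψ + ρ w := hρ.1 ψ w
      have h2 : ρ ψ + ρ w ≠ ⊤ := by rw [← hρψw, ← heq]; exact htop
      obtain ⟨hψt, hwt⟩ := WithTop.add_ne_top.mp h2
      have hμψw : ρ b < μ (ψ * w) := by
        rw [hμ.1 ψ w]
        calc ρ b = ρ ψ + ρ w := heq.trans hρψw
          _ < μ ψ + ρ w := WithTop.add_lt_add_right hwt hψlt
          _ ≤ μ ψ + μ w := add_le_add_right (hρμ w) _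
      have h3 : μ (b + ψ * w) = min (μ b) (μ (ψ * w)) :=
        ev_add_eq_min hv hμ (by rw [hμb]; exact ne_of_lt hμψw)
      rw [min_eq_left (by rw [hμb]; exact hμψw.le), hμb] at h3
      have h4 : ρ (b + ψ * w) ≤ μ (b + ψ * w) := hρμ _
      rw [h3] at h4
      exact absurd h4 (not_le.mpr hcon)
    · exact ev_add_eq_min hv hρ hne
  -- Lemma A: ψ-expansions compute ρ
  have hA : ∀ (n : ℕ) (a : ℕ → Polynomial K), (∀ s, (a s).natDegree < ψ.natDegree) →
      ρ (∑ s ∈ range n, a s * ψ ^ s) = (range n).inf (fun s => ρ (a s * ψ ^ s)) := by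
    intro n
    induction n with
    | zero => simp [hρ0]
    | succ n ih =>
      intro a ha
      rw [hdecomp a n, hB1 (a 0) _ (ha 0), hρ.1 ψ _, ih (fun s => a (s + 1)) (fun s => ha (s + 1)),
        add_inf']
      rw [inf_range_succ' (fun s => ρ (a s * ψ ^ s)) n]
      simp only [pow_zero, mul_one]
      congr 1
      refine Finset.inf_congr rfl (fun s _ => ?_)
      rw [← hρ.1]
      congr 1
      ring
  -- Main lemma: if ρ f = μ f then μ f = ν f
  have hK : ∀ d : ℕ, ∀ f : Polynomial K, f.natDegree ≤ d → ρ f = μ f → μ f = ν f := by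
    intro d
    induction d using Nat.strong_induction_on with
    | _ d ih =>
      intro f hfd hfρμ
      rcases eq_or_ne (μ f) ⊤ with htop | htop
      · refine le_antisymm (hμν f) ?_
        rw [htop]; exact le_top
      have hf0 : f ≠ 0 := by
        rintro rfl
        exact htop hμ0
      by_cases hcase : f.natDegree < ψ.natDegree
      · -- small degree case
        by_contra hne
        have hlt : μ f < ν f := lt_of_le_of_ne (hμν f) hne
        obtain ⟨g, hgmonic, hgdeg, c, hc, hρf, hμf, hνf⟩ := hmon f hf0
        have hvc : v c ≠ ⊤ := hvtop c hc
        have hgρμ : ρ g = μ g := by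
          have h := hfρμ
          rw [hρf, hμf] at h
          exact WithTop.add_right_cancel hvc h
        have hgμν : μ g < ν g := by
          rw [hμf, hνf] at hlt
          exact (WithTop.add_lt_add_iff_right hvc).mp hlt
        have hgd : 0 < g.natDegree := by
          rcases Nat.eq_zero_or_pos g.natDegree with h0 | h
          · exfalso
            have h1 : g = 1 := hgmonic.natDegree_eq_zero.mp h0
            rw [h1, ev_one hv hμ, ev_one hv hν] at hgμν
            exact lt_irrefl _ hgμν
          · exact h
        have hdiv : ψ %ₘ g + g * (ψ /ₘ g) = ψ := modByMonic_add_div ψ g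
        have hrd : (ψ %ₘ g).natDegree < g.natDegree := hmodlt ψ g hgmonic hgd
        have hgψ : g.natDegree < ψ.natDegree := by omega
        have hrm : (ψ %ₘ g).natDegree < ψ.natDegree := by omega
        have hqd : (ψ /ₘ g).natDegree < ψ.natDegree := by
          rw [natDegree_divByMonic ψ hgmonic]
          omega
        have hρq : ρ (ψ /ₘ g) = μ (ψ /ₘ g) := hlow _ hqd
        have hρr : ρ (ψ %ₘ g) = μ (ψ %ₘ g) := hlow _ hrm
        have hνr : ν (ψ %ₘ g) = μ (ψ %ₘ g) := by
          have h1 : (ψ %ₘ g).natDegree < d := by omega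
          exact (ih (ψ %ₘ g).natDegree h1 (ψ %ₘ g) le_rfl hρr).symm
        have hρgq : ρ (g * (ψ /ₘ g)) = μ (g * (ψ /ₘ g)) := by
          rw [hρ.1, hμ.1, hgρμ, hρq]
        rcases eq_or_ne (μ (g * (ψ /ₘ g))) (μ (ψ %ₘ g)) with heq | hne2
        · -- equal values case
          have hMle : μ (ψ %ₘ g) ≤ ρ ψ := by
            have h1 : min (ρ (ψ %ₘ g)) (ρ (g * (ψ /ₘ g))) ≤ ρ (ψ %ₘ g + g * (ψ /ₘ g)) :=
              hρ.2.1 _ _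
            rw [hdiv, hρr, hρgq, heq, min_self] at h1
            exact h1
          have hMlt : μ (ψ %ₘ g) < μ ψ := lt_of_le_of_lt hMle hψlt
          have hMtop : μ (ψ %ₘ g) ≠ ⊤ := hMlt.ne_top
          have hμgq_top : μ g + μ (ψ /ₘ g) ≠ ⊤ := by
            rw [← hμ.1, heq]; exact hMtop
          obtain ⟨hμgt, hμqt⟩ := WithTop.add_ne_top.mp hμgq_top
          have hνgq : μ (ψ %ₘ g) < ν (g * (ψ /ₘ g)) := by
            rw [hν.1]
            calc μ (ψ %ₘ g) = μ g + μ (ψ /ₘ g) := heq.symm.trans (hμ.1 g _)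
              _ < ν g + μ (ψ /ₘ g) := WithTop.add_lt_add_right hμqt hgμν
              _ ≤ ν g + ν (ψ /ₘ g) := add_le_add_right (hμν _) _
          have hνψ : ν ψ = μ (ψ %ₘ g) := by
            have h4 : ν (ψ %ₘ g + g * (ψ /ₘ g)) = min (ν (ψ %ₘ g)) (ν (g * (ψ /ₘ g))) :=
              ev_add_eq_min hv hν (by rw [hνr]; exact ne_of_lt hνgq)
            rw [hdiv] at h4
            rw [h4, hνr]
            exact min_eq_left hνgq.le
          have h5 : μ ψ ≤ ν ψ := hμν ψ
          rw [hνψ] at h5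
          exact absurd h5 (not_le.mpr hMlt)
        · -- distinct values case
          have h1 : ρ ψ = min (ρ (ψ %ₘ g)) (ρ (g * (ψ /ₘ g))) := by
            have h1' : ρ (ψ %ₘ g + g * (ψ /ₘ g)) = min (ρ (ψ %ₘ g)) (ρ (g * (ψ /ₘ g))) :=
              ev_add_eq_min hv hρ (by rw [hρr, hρgq]; exact Ne.symm hne2)
            rwa [hdiv] at h1'
          have h2 : μ ψ = min (μ (ψ %ₘ g)) (μ (g * (ψ /ₘ g))) := by
            have h2' : μ (ψ %ₘ g + g * (ψ /ₘ g)) = min (μ (ψ %ₘ g)) (μ (g * (ψ /ₘ g))) :=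
              ev_add_eq_min hv hμ (Ne.symm hne2)
            rwa [hdiv] at h2'
          have h3 := hψlt
          rw [h1, h2, hρr, hρgq] at h3
          exact lt_irrefl _ h3
      · -- main case : degree at least m
        push_neg at hcase
        obtain ⟨n, a, ha, hfeq⟩ := hexp f
        rcases n with _ | n
        · exfalso
          rw [Finset.range_zero, Finset.sum_empty] at hfeq
          exact hf0 hfeq
        have hAeq : ρ f = (range (n + 1)).inf (fun s => ρ (a s * ψ ^ s)) := by
          conv_lhs => rw [hfeq]
          exact hA (n + 1) a ha
        have hinfμ : (range (n + 1)).inf (fun s => μ (a s * ψ ^ s)) = μ f := by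
          refine le_antisymm ?_ ?_
          · conv_rhs => rw [hfeq]
            exact ev_inf_le_sum hv hμ _ (n + 1)
          · calc μ f = ρ f := hfρμ.symm
              _ = (range (n + 1)).inf (fun s => ρ (a s * ψ ^ s)) := hAeq
              _ ≤ (range (n + 1)).inf (fun s => μ (a s * ψ ^ s)) :=
                Finset.inf_mono_fun (fun s _ => hρμ _)
        have hbig : ∀ s ∈ range (n + 1), s ≠ 0 → μ f < μ (a s * ψ ^ s) := by
          intro s hs hs0
          have hge : μ f ≤ μ (a s * ψ ^ s) := by
            rw [← hinfμ]
            exact Finset.inf_le hs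
          rcases lt_or_eq_of_le hge with h | h
          · exact h
          exfalso
          have hρterm : μ f ≤ ρ (a s * ψ ^ s) := by
            calc μ f = ρ f := hfρμ.symm
              _ ≤ ρ (a s * ψ ^ s) := by rw [hAeq]; exact Finset.inf_le hs
          have heqterm : ρ (a s * ψ ^ s) = μ (a s * ψ ^ s) :=
            le_antisymm (hρμ _) (by rw [← h]; exact hρterm)
          have has : ρ (a s) = μ (a s) := hlow (a s) (ha s)
          rw [hρ.1, hμ.1, has] at heqterm
          have htops : μ (a s) + μ (ψ ^ s) ≠ ⊤ := by
            rw [← hμ.1, ← h]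
            exact htop
          obtain ⟨ht1, ht2⟩ := WithTop.add_ne_top.mp htops
          have hcancel : ρ (ψ ^ s) = μ (ψ ^ s) := WithTop.add_left_cancel ht1 heqterm
          obtain ⟨k, rfl⟩ : ∃ k, s = k + 1 := ⟨s - 1, by omega⟩
          have hρpow : ρ (ψ ^ (k + 1)) = ρ (ψ ^ k) + ρ ψ := by rw [pow_succ, hρ.1]
          have hμpow : μ (ψ ^ (k + 1)) = μ (ψ ^ k) + μ ψ := by rw [pow_succ, hμ.1]
          have hρstop : ρ (ψ ^ (k + 1)) ≠ ⊤ := by rw [hcancel]; exact ht2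
          have h5 : ρ (ψ ^ k) ≠ ⊤ := by
            intro hk
            rw [hρpow, hk, top_add] at hρstop
            exact hρstop rfl
          have h6 : ρ (ψ ^ (k + 1)) < μ (ψ ^ (k + 1)) := by
            rw [hρpow, hμpow]
            calc ρ (ψ ^ k) + ρ ψ < ρ (ψ ^ k) + μ ψ := WithTop.add_lt_add_left h5 hψlt
              _ ≤ μ (ψ ^ k) + μ ψ := add_le_add_left (hρμ _) _
          rw [hcancel] at h6
          exact lt_irrefl _ h6
        have h0mem : (0 : ℕ) ∈ range (n + 1) := mem_range.mpr (Nat.succ_pos n)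
        obtain ⟨i, hi, hieq⟩ := Finset.exists_mem_eq_inf (range (n + 1)) ⟨0, h0mem⟩
          (fun s => μ (a s * ψ ^ s))
        have hi0 : i = 0 := by
          by_contra hi0
          have h7 := hbig i hi hi0
          rw [← hieq, hinfμ] at h7
          exact lt_irrefl _ h7
        have hμa0 : μ (a 0) = μ f := by
          rw [hi0, hinfμ] at hieq
          simpa [pow_zero, mul_one] using hieq.symm
        have hρa0 : ρ (a 0) = μ (a 0) := hlow (a 0) (ha 0)
        have hνa0 : ν (a 0) = μ (a 0) := by
          have h8 : (a 0).natDegree < d := by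
            have := ha 0
            omega
          exact (ih (a 0).natDegree h8 (a 0) le_rfl hρa0).symm
        have hw : f = a 0 + ψ * ∑ s ∈ range n, a (s + 1) * ψ ^ s := by
          rw [hfeq, hdecomp a n]
        have hνrest : μ f < ν (ψ * ∑ s ∈ range n, a (s + 1) * ψ ^ s) := by
          rw [hν.1]
          have hstep : ∀ s ∈ range n, μ f < ν ψ + ν (a (s + 1) * ψ ^ s) := by
            intro s hs
            have hmem : s + 1 ∈ range (n + 1) := by
              rw [mem_range] at hs ⊢
              omega
            have h7 : μ f < μ (a (s + 1) * ψ ^ (s + 1)) := hbig (s + 1) hmem (Nat.succ_ne_zero s)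
            have h9 : ν (a (s + 1) * ψ ^ (s + 1)) = ν ψ + ν (a (s + 1) * ψ ^ s) := by
              rw [← hν.1]
              congr 1
              ring
            calc μ f < μ (a (s + 1) * ψ ^ (s + 1)) := h7
              _ ≤ ν (a (s + 1) * ψ ^ (s + 1)) := hμν _
              _ = ν ψ + ν (a (s + 1) * ψ ^ s) := h9
          have h10 : μ f < (range n).inf (fun s => ν ψ + ν (a (s + 1) * ψ ^ s)) :=
            (Finset.lt_inf_iff (lt_top_iff_ne_top.mpr htop)).mpr hstep
          calc μ f < (range n).inf (fun s => ν ψ + ν (a (s + 1) * ψ ^ s)) := h10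
            _ = ν ψ + (range n).inf (fun s => ν (a (s + 1) * ψ ^ s)) := (add_inf' _ _ n).symm
            _ ≤ ν ψ + ν (∑ s ∈ range n, a (s + 1) * ψ ^ s) :=
              add_le_add_right (ev_inf_le_sum hv hν _ n) _
        have hfinal : ν f = μ f := by
          have hne' : ν (a 0) ≠ ν (ψ * ∑ s ∈ range n, a (s + 1) * ψ ^ s) := by
            rw [hνa0, hμa0]
            exact ne_of_lt hνrest
          conv_lhs => rw [hw]
          rw [ev_add_eq_min hv hν hne', hνa0, hμa0]
          exact min_eq_left hνrest.le
        exact hfinal.symm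
  have hKf : ∀ f : Polynomial K, ρ f = μ f → μ f = ν f := fun f h => hK f.natDegree f le_rfl h
  have hiff : ∀ f : Polynomial K, (ρ f < ν f ↔ ρ f < μ f) := by
    intro f
    constructor
    · intro h
      rcases lt_or_eq_of_le (hρμ f) with h1 | h1
      · exact h1
      · exfalso
        have h2 := hKf f h1
        rw [h1, h2] at h
        exact lt_irrefl _ h
    · intro h
      exact lt_of_lt_of_le h (hμν f)
  constructor
  · ext φ
    simp only [PhiSet, Set.mem_setOf_eq]
    constructor
    · rintro ⟨h1, h2, h3⟩
      exact ⟨h1, (hiff φ).mpr h2, fun g hg hlt => h3 g hg ((hiff g).mp hlt)⟩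
    · rintro ⟨h1, h2, h3⟩
      exact ⟨h1, (hiff φ).mp h2, fun g hg hlt => h3 g hg ((hiff g).mpr hlt)⟩
  · intro f
    constructor
    · intro h
      exact le_antisymm (hρμ f) ((hμν f).trans h.symm.le)
    · intro h
      rw [h]
      exact hKf f h
end
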